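/- arXiv:1210.4101 — 7 statements merged into one kernel-verified Lean document; each statement's English description precedes it below -/
import Mathlib

section
/- Let k ≥ 2 and n ≥ 3 be integers. Then the number of prime factors of F_n^{(k)} counted with multiplicity is at most n − 2; in particular, every exponent in the prime factorization of F_n^{(k)} is at most n − 2. -/
/-- Auxiliary sequence: `gfib k i` is the `k`-generalized Fibonacci sequence re-indexed so that
index `i` corresponds to `n = i - (k - 2)`; i.e. `gfib k i = 0` for `i < k - 1`,
`gfib k (k-1) = 1`, and each later term is the sum of the `k` preceding terms. -/
def gfib (k : ℕ) (i : ℕ) : ℕ :=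
  if _h1 : k < 2 then 0
  else if _h2 : i + 1 < k then 0
  else if _h3 : i + 1 = k then 1
  else ∑ j ∈ Finset.range k, gfib k (i - 1 - j)
decreasing_by omega

/-- `genFib k n` is the `n`-th `k`-generalized Fibonacci number `F_n^{(k)}` (for `n ≥ 0`):
`F_0 = ⋯ = 0`, `F_1 = 1` and `F_n = F_{n-1} + ⋯ + F_{n-k}`. -/
def genFib (k : ℕ) (n : ℕ) : ℕ := gfib k (n + k - 2)

/-- `P m`: the largest prime factor of `m`, with `P 0 = P 1 = 1`. -/
def largestPrimeFactor (m : ℕ) : ℕ := max 1 (m.primeFactors.sup id)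

/-- The characteristic polynomial `Ψ_k(x) = x^k - x^{k-1} - ⋯ - x - 1` as a function. -/
def psiFun {R : Type*} [CommRing R] (k : ℕ) (x : R) : R := x ^ k - ∑ i ∈ Finset.range k, x ^ i

/-- `f_k(x) = (x - 1)/(2 + (k+1)(x-2))`. -/
noncomputable def fk (k : ℕ) (x : ℝ) : ℝ := (x - 1) / (2 + (k + 1) * (x - 2))

lemma gfib_zero {k i : ℕ} (h : i + 1 < k) : gfib k i = 0 := by
  rw [gfib]; split_ifs <;> simp_all

lemma gfib_base {k : ℕ} (hk : 2 ≤ k) : gfib k (k - 1) = 1 := by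
  rw [gfib]; split_ifs <;> omega

lemma gfib_rec {k i : ℕ} (hk : 2 ≤ k) (hi : k ≤ i) :
    gfib k i = ∑ j ∈ Finset.range k, gfib k (i - 1 - j) := by
  rw [gfib]; split_ifs; · omega
  · omega
  · omega
  · rfl

lemma gfib_k {k : ℕ} (hk : 2 ≤ k) : gfib k k = 1 := by
  rw [gfib_rec hk le_rfl]
  obtain ⟨m, rfl⟩ : ∃ m, k = m + 1 := ⟨k - 1, by omega⟩
  rw [Finset.sum_range_succ']
  have h0 : (m + 1) - 1 - 0 = m := by omega
  have h1 : ∀ j ∈ Finset.range m, gfib (m+1) ((m+1) - 1 - (j+1)) = 0 := by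
    intro j hj
    exact gfib_zero (by simp at hj; omega)
  rw [Finset.sum_congr rfl h1, h0]
  have : gfib (m+1) m = 1 := by
    have := gfib_base hk; simpa using this
  simp [this]

lemma gfib_step {k i : ℕ} (hk : 2 ≤ k) (hi : k + 1 ≤ i) :
    gfib k i ≤ 2 * gfib k (i - 1) := by
  obtain ⟨m, rfl⟩ : ∃ m, k = m + 1 := ⟨k - 1, by omega⟩
  have hd : gfib (m+1) (i-1) = ∑ j ∈ Finset.range m, gfib (m+1) (i - 1 - 1 - j)
      + gfib (m+1) (i - 1 - 1 - m) := by
    rw [gfib_rec hk (by omega), Finset.sum_range_succ]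
  rw [gfib_rec hk (by omega), Finset.sum_range_succ' _ m]
  have e1 : ∀ j, i - 1 - (j + 1) = (i - 1) - 1 - j := by intro j; omega
  rw [Finset.sum_congr rfl (fun j _ => congrArg (gfib (m+1)) (e1 j))]
  simp only [Nat.sub_zero]
  omega

lemma gfib_le {k : ℕ} (hk : 2 ≤ k) : ∀ s, gfib k (k + s) ≤ 2 ^ s := by
  intro s
  induction s with
  | zero => simp [gfib_k hk]
  | succ t ih =>
    have h := gfib_step hk (i := k + (t+1)) (by omega)
    have e : k + (t + 1) - 1 = k + t := by omega
    rw [e] at h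
    calc gfib k (k + (t+1)) ≤ 2 * gfib k (k + t) := h
    _ ≤ 2 * 2 ^ t := by omega
    _ = 2 ^ (t+1) := by ring

lemma gfib_pos {k : ℕ} (hk : 2 ≤ k) : ∀ s, 1 ≤ gfib k (k + s) := by
  intro s
  induction s with
  | zero => simp [gfib_k hk]
  | succ t ih =>
    rw [gfib_rec hk (by omega)]
    calc 1 ≤ gfib k (k + (t+1) - 1 - 0) := by
          have : k + (t+1) - 1 - 0 = k + t := by omega
          rw [this]; exact ih
    _ ≤ _ := Finset.single_le_sum (f := fun j => gfib k (k + (t+1) - 1 - j))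
        (fun i _ => Nat.zero_le _) (by simp [hk]; omega)

/-- For `k ≥ 2` and `n ≥ 3`, the number of prime factors of `F_n^{(k)}` counted with
multiplicity is at most `n - 2`; in particular every exponent in the prime factorization
of `F_n^{(k)}` is at most `n - 2`. -/
theorem genFib_primeFactors_count_le (k n : ℕ) (hk : 2 ≤ k) (hn : 3 ≤ n) :
    (genFib k n).primeFactorsList.length ≤ n - 2 ∧
    ∀ p : ℕ, (genFib k n).factorization p ≤ n - 2 := by
  set m := genFib k n with hm
  have hidx : n + k - 2 = k + (n - 2) := by omega
  have hle : m ≤ 2 ^ (n - 2) := by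
    rw [hm, genFib, hidx]; exact gfib_le hk _
  have hpos : 1 ≤ m := by
    rw [hm, genFib, hidx]; exact gfib_pos hk _
  have hlen : m.primeFactorsList.length ≤ n - 2 := by
    have h2 : 2 ^ m.primeFactorsList.length ≤ m := by
      calc 2 ^ m.primeFactorsList.length ≤ m.primeFactorsList.prod :=
        List.pow_card_le_prod _ _ (fun x hx => (Nat.prime_of_mem_primeFactorsList hx).two_le)
      _ = m := Nat.prod_primeFactorsList (by omega)
    exact (Nat.pow_le_pow_iff_right (by norm_num)).mp (h2.trans hle)
  refine ⟨hlen, fun p => ?_⟩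
  calc m.factorization p = m.primeFactorsList.count p := Nat.primeFactorsList_count_eq.symm
  _ ≤ m.primeFactorsList.length := List.count_le_length
  _ ≤ n - 2 := hlen
end

section
/- Let k ≥ 3 be an integer and let z be a complex root of Ψ_k with |z| < 1. Then |2 + (k+1)(z − 2)| > k − 1. -/
/-- For `k ≥ 3`, any complex root `z` of `Ψ_k` with `|z| < 1` satisfies
`|2 + (k+1)(z-2)| > k - 1`. -/
theorem abs_denom_gt (k : ℕ) (hk : 3 ≤ k) (z : ℂ) (hroot : psiFun k z = 0)
    (hz : ‖z‖ < 1) :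
    ‖(2 + (k + 1 : ℂ) * (z - 2))‖ > (k : ℝ) - 1 := by
  have h1 : (2 + (k + 1 : ℂ) * (z - 2)) = (k + 1 : ℂ) * z - 2 * k := by push_cast; ring
  rw [h1, norm_sub_rev]
  have h2 : ‖((2 * k : ℂ))‖ - ‖((k + 1 : ℂ) * z)‖ ≤
      ‖((2 * k : ℂ) - (k + 1) * z)‖ :=
    norm_sub_norm_le _ _
  have hab : ‖((2 * k : ℂ))‖ = 2 * k := by
    simpa using Complex.norm_natCast (2 * k)
  have hk1 : ‖((k + 1 : ℂ) * z)‖ = (k + 1) * ‖z‖ := by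
    rw [norm_mul]
    congr 1
    exact_mod_cast Complex.norm_natCast (k + 1)
  have hkpos : (0 : ℝ) < (k : ℝ) + 1 := by positivity
  have h3 : ((k : ℝ) + 1) * ‖z‖ < (k + 1) * 1 :=
    mul_lt_mul_of_pos_left hz hkpos
  rw [hab, hk1] at h2
  linarith
end

section
/- Let k ≥ 2 be an integer and let z be any complex root of Ψ_k. Then |z − 1| < |2 + (k+1)(z − 2)|; in other words, |(z − 1)/(2 + (k+1)(z − 2))| < 1. -/
open Real in
lemma aux1 (k : ℕ) (hk : 2 ≤ k) : (k : ℝ) < (3/2 : ℝ) ^ k := by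
  induction k with
  | zero => norm_num
  | succ n ih =>
    rcases Nat.lt_or_ge n 2 with h | h
    · interval_cases n <;> norm_num
    · have h1 := ih h
      have h2 : (3/2:ℝ)^(n+1) = (3/2) * (3/2:ℝ)^n := by ring
      have : (2:ℝ) ≤ n := by exact_mod_cast h
      push_cast
      nlinarith [pow_pos (by norm_num : (0:ℝ) < 3/2) n]

lemma aux2 (k : ℕ) (hk : 2 ≤ k) : ((k : ℝ) + 2)/3 < (5/4 : ℝ) ^ k := by
  induction k with
  | zero => norm_num
  | succ n ih =>
    rcases Nat.lt_or_ge n 2 with h | h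
    · interval_cases n <;> norm_num
    · have h1 := ih h
      have : (2:ℝ) ≤ n := by exact_mod_cast h
      push_cast
      have h2 : (5/4:ℝ)^(n+1) = (5/4) * (5/4:ℝ)^n := by ring
      nlinarith [pow_pos (by norm_num : (0:ℝ) < 5/4) n]

lemma endpoint1 (k : ℕ) (hk : 2 ≤ k) :
    1 < ((2*(k:ℝ)+1)/((k:ℝ)+2)) ^ k * (2 - (2*(k:ℝ)+1)/((k:ℝ)+2)) := by
  have hK : (2:ℝ) ≤ (k:ℝ) := by exact_mod_cast hk
  set p : ℝ := (2*(k:ℝ)+1)/((k:ℝ)+2) with hp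
  have hk2 : (0:ℝ) < (k:ℝ) + 2 := by linarith
  have h54 : (5/4:ℝ) ≤ p := by rw [hp, le_div_iff₀ hk2]; linarith
  have h2p : 2 - p = 3/((k:ℝ)+2) := by rw [hp]; field_simp; ring
  have hpow : (5/4:ℝ)^k ≤ p ^ k := pow_le_pow_left₀ (by norm_num) h54 k
  have ha := aux2 k hk
  rw [h2p]
  have h3 : 0 < 3/((k:ℝ)+2) := by positivity
  calc 1 = (((k:ℝ)+2)/3) * (3/((k:ℝ)+2)) := by field_simp
    _ < (5/4:ℝ)^k * (3/((k:ℝ)+2)) := by exact mul_lt_mul_of_pos_right ha h3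
    _ ≤ p ^ k * (3/((k:ℝ)+2)) := mul_le_mul_of_nonneg_right hpow h3.le

lemma endpoint2 (k : ℕ) (hk : 2 ≤ k) :
    1 < ((2*(k:ℝ)-1)/(k:ℝ)) ^ k * (2 - (2*(k:ℝ)-1)/(k:ℝ)) := by
  have hK : (2:ℝ) ≤ (k:ℝ) := by exact_mod_cast hk
  set q : ℝ := (2*(k:ℝ)-1)/(k:ℝ) with hq
  have hk0 : (0:ℝ) < (k:ℝ) := by linarith
  have h32 : (3/2:ℝ) ≤ q := by rw [hq, le_div_iff₀ hk0]; linarith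
  have h2q : 2 - q = 1/(k:ℝ) := by rw [hq]; field_simp; ring
  have hpow : (3/2:ℝ)^k ≤ q ^ k := pow_le_pow_left₀ (by norm_num) h32 k
  have ha := aux1 k hk
  rw [h2q]
  have h3 : 0 < 1/(k:ℝ) := by positivity
  calc 1 = (k:ℝ) * (1/(k:ℝ)) := by field_simp
    _ < (3/2:ℝ)^k * (1/(k:ℝ)) := mul_lt_mul_of_pos_right ha h3
    _ ≤ q ^ k * (1/(k:ℝ)) := mul_le_mul_of_nonneg_right hpow h3.le

lemma key (k : ℕ) (hk : 2 ≤ k) (x : ℝ)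
    (hpx : (2*(k:ℝ)+1)/((k:ℝ)+2) ≤ x) (hxq : x ≤ (2*(k:ℝ)-1)/(k:ℝ)) :
    1 < x ^ k * (2 - x) := by
  have hK : (2:ℝ) ≤ (k:ℝ) := by exact_mod_cast hk
  set p : ℝ := (2*(k:ℝ)+1)/((k:ℝ)+2) with hpdef
  set q : ℝ := (2*(k:ℝ)-1)/(k:ℝ) with hqdef
  have hk0 : (0:ℝ) < (k:ℝ) := by linarith
  have hk2 : (0:ℝ) < (k:ℝ) + 2 := by linarith
  have hpq : p < q := by
    rw [hpdef, hqdef, div_lt_div_iff₀ hk2 hk0]; nlinarith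
  have hp0 : 0 < p := by rw [hpdef]; positivity
  have hq2 : q < 2 := by rw [hqdef, div_lt_iff₀ hk0]; linarith
  have hx0 : 0 < x := lt_of_lt_of_le hp0 hpx
  have hx2 : 0 < 2 - x := by linarith [lt_of_le_of_lt hxq hq2]
  set l : ℝ := (q - x)/(q - p) with hldef
  have hqp : 0 < q - p := by linarith
  have hl0 : 0 ≤ l := by apply div_nonneg <;> linarith
  have hl1 : l ≤ 1 := by rw [hldef, div_le_one hqp]; linarith
  have hsum : l + (1 - l) = 1 := by ring
  have hxeq : x = l * p + (1 - l) * q := by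
    rw [hldef]; field_simp; ring
  -- AM-GM
  have am1 : p ^ l * q ^ (1 - l) ≤ x := by
    rw [hxeq]
    exact Real.geom_mean_le_arith_mean2_weighted hl0 (by linarith) hp0.le (by linarith) hsum
  have am2 : (2-p) ^ l * (2-q) ^ (1 - l) ≤ 2 - x := by
    have : 2 - x = l * (2-p) + (1-l) * (2-q) := by rw [hxeq]; ring
    rw [this]
    exact Real.geom_mean_le_arith_mean2_weighted hl0 (by linarith) (by linarith) (by linarith) hsum
  have e1 := endpoint1 k hk
  have e2 := endpoint2 k hk
  rw [← hpdef] at e1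
  rw [← hqdef] at e2
  have hGp : (0:ℝ) < p ^ k * (2 - p) := by positivity
  have hGq : (0:ℝ) < q ^ k * (2 - q) := by nlinarith
  -- 1 < Gp^l * Gq^(1-l)
  have hmain : 1 < (p ^ k * (2 - p)) ^ l * (q ^ k * (2 - q)) ^ (1 - l) := by
    rcases eq_or_lt_of_le hl0 with h0 | h0
    · rw [← h0]; simp; linarith
    · have h1 : 1 < (p ^ k * (2 - p)) ^ l :=
        (Real.one_lt_rpow_iff_of_pos hGp).2 (Or.inl ⟨e1, h0⟩)
      have h2 : 1 ≤ (q ^ k * (2 - q)) ^ (1 - l) :=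
        Real.one_le_rpow e2.le (by linarith)
      nlinarith [Real.rpow_pos_of_pos hGq (1-l)]
  -- rewrite LHS
  have hrw : (p ^ k * (2 - p)) ^ l * (q ^ k * (2 - q)) ^ (1 - l)
      = (p ^ l * q ^ (1-l)) ^ k * ((2-p) ^ l * (2-q) ^ (1-l)) := by
    rw [Real.mul_rpow (pow_nonneg hp0.le k) (by linarith),
        Real.mul_rpow (pow_nonneg (by linarith : (0:ℝ) ≤ q) k) (by linarith),
        ← Real.rpow_natCast_mul hp0.le, ← Real.rpow_natCast_mul (by linarith : (0:ℝ) ≤ q),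
        mul_comm ((k:ℕ):ℝ) l, mul_comm ((k:ℕ):ℝ) (1-l),
        Real.rpow_mul_natCast hp0.le, Real.rpow_mul_natCast (by linarith : (0:ℝ) ≤ q)]
    ring
  rw [hrw] at hmain
  have hfin : (p ^ l * q ^ (1-l)) ^ k * ((2-p) ^ l * (2-q) ^ (1-l)) ≤ x ^ k * (2 - x) := by
    have hnn1 : (0:ℝ) ≤ p ^ l * q ^ (1-l) :=
      mul_nonneg (Real.rpow_nonneg hp0.le l) (Real.rpow_nonneg (by linarith) (1-l))
    have hnn2 : (0:ℝ) ≤ (2-p) ^ l * (2-q) ^ (1-l) :=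
      mul_nonneg (Real.rpow_nonneg (by linarith) l) (Real.rpow_nonneg (by linarith) (1-l))
    exact mul_le_mul (pow_le_pow_left₀ hnn1 am1 k) am2 hnn2 (pow_nonneg hx0.le k)
  linarith

lemma realContr (k : ℕ) (hk : 2 ≤ k) (a b : ℝ)
    (hn2 : (a^2+b^2)^k * ((2-a)^2+b^2) = 1)
    (hR : (((k:ℝ)+1)*a - 2*(k:ℝ))^2 + (((k:ℝ)+1)*b)^2 ≤ (a-1)^2 + b^2) : False := by
  have hK : (2:ℝ) ≤ (k:ℝ) := by exact_mod_cast hk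
  set K : ℝ := (k:ℝ) with hKdef
  have hK0 : (0:ℝ) < K := by linarith
  have hK2 : (0:ℝ) < K + 2 := by linarith
  have hprod : ((K+2)*a - (2*K+1))*(K*a - (2*K-1)) ≤ 0 := by
    nlinarith [hR, mul_nonneg (mul_nonneg hK0.le hK2.le) (sq_nonneg b)]
  have hbounds : (2*K+1)/(K+2) ≤ a ∧ a ≤ (2*K-1)/K := by
    rcases mul_nonpos_iff.mp hprod with ⟨hf1, hf2⟩ | ⟨hf1, hf2⟩
    · exact ⟨by rw [div_le_iff₀ hK2]; linarith, by rw [le_div_iff₀ hK0]; linarith⟩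
    · exfalso; nlinarith
  obtain ⟨hpa, haq⟩ := hbounds
  have hkey := key k hk a hpa haq
  have ha0 : 0 < a := lt_of_lt_of_le (by positivity) hpa
  have ha2 : a < 2 := lt_of_le_of_lt haq (by rw [div_lt_iff₀ hK0]; linarith)
  have h5 : (a^2)^k ≤ (a^2+b^2)^k :=
    pow_le_pow_left₀ (sq_nonneg a) (by nlinarith [sq_nonneg b]) k
  have h6 : (2-a)^2 ≤ (2-a)^2 + b^2 := by nlinarith [sq_nonneg b]
  have h7 : (a^2)^k * (2-a)^2 ≤ 1 := by
    rw [← hn2]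
    exact mul_le_mul h5 h6 (sq_nonneg _) (pow_nonneg (by positivity) k)
  have h8 : (a^k * (2-a))^2 = (a^2)^k * (2-a)^2 := by
    rw [mul_pow, ← pow_mul, ← pow_mul, mul_comm 2 k]
  have h9 : 1 < (a^k * (2-a))^2 := by nlinarith [hkey]
  rw [h8] at h9
  linarith


/-- For `k ≥ 2`, every complex root `z` of `Ψ_k` satisfies
`|z - 1| < |2 + (k+1)(z-2)|`, i.e. `|(z-1)/(2 + (k+1)(z-2))| < 1`. -/
theorem abs_num_lt_abs_denom (k : ℕ) (hk : 2 ≤ k) (z : ℂ) (hroot : psiFun k z = 0) :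
    ‖z - 1‖ < ‖2 + (k + 1 : ℂ) * (z - 2)‖ ∧
    ‖(z - 1) / (2 + (k + 1 : ℂ) * (z - 2))‖ < 1 := by
  -- z^k * (2 - z) = 1
  have h1 : z ^ k * (2 - z) = 1 := by
    unfold psiFun at hroot
    have hs : ∑ i ∈ Finset.range k, z ^ i = z ^ k := by linear_combination -hroot
    have h2 := geom_sum_mul z k
    rw [hs] at h2
    linear_combination -h2
  have hn2 : (z.re^2+z.im^2)^k * ((2-z.re)^2+z.im^2) = 1 := by
    have h0 := congrArg Complex.normSq h1
    rw [map_mul, map_pow] at h0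
    simp only [Complex.normSq_apply, Complex.sub_re, Complex.sub_im, Complex.re_ofNat,
      Complex.im_ofNat, Complex.normSq_one] at h0
    rw [show (z.re^2+z.im^2 : ℝ) = z.re*z.re+z.im*z.im from by ring,
        show ((2-z.re)^2+z.im^2 : ℝ) = (2-z.re)*(2-z.re)+(0-z.im)*(0-z.im) from by ring, h0]
    norm_num
  have hD : Complex.normSq (z - 1) < Complex.normSq (2 + (k + 1 : ℂ) * (z - 2)) := by
    by_contra hcon
    push_neg at hcon
    have hre : (2 + (k + 1 : ℂ) * (z - 2)).re = ((k:ℝ)+1)*z.re - 2*(k:ℝ) := by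
      simp [Complex.add_re, Complex.mul_re, Complex.sub_re, Complex.sub_im]
      ring
    have him : (2 + (k + 1 : ℂ) * (z - 2)).im = ((k:ℝ)+1)*z.im := by
      simp [Complex.add_im, Complex.mul_im, Complex.sub_re, Complex.sub_im]
    have hR : (((k:ℝ)+1)*z.re - 2*(k:ℝ))^2 + (((k:ℝ)+1)*z.im)^2 ≤ (z.re-1)^2 + z.im^2 := by
      have h3 : Complex.normSq (2 + (k + 1 : ℂ) * (z - 2))
          = (((k:ℝ)+1)*z.re - 2*(k:ℝ))^2 + (((k:ℝ)+1)*z.im)^2 := by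
        rw [Complex.normSq_apply, hre, him]; ring
      have h4 : Complex.normSq (z - 1) = (z.re-1)^2 + z.im^2 := by
        rw [Complex.normSq_apply]; simp [Complex.sub_re, Complex.sub_im]; ring
      rw [h3, h4] at hcon; exact hcon
    exact realContr k hk z.re z.im hn2 hR
  have habs : ‖z - 1‖ < ‖2 + (k + 1 : ℂ) * (z - 2)‖ := by
    rw [Complex.norm_def, Complex.norm_def]
    exact Real.sqrt_lt_sqrt (Complex.normSq_nonneg _) hD
  refine ⟨habs, ?_⟩
  rw [norm_div, div_lt_one (lt_of_le_of_lt (norm_nonneg _) habs)]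
  exact habs
end

section
/- Let k ≥ 2 be an integer and let α_1, …, α_k be the complex roots of Ψ_k. Then the product ∏_{i=1}^{k} |2 + (k+1)(α_i − 2)| equals (k+1)^k · |Ψ_k(2 − 2/(k+1))| and is strictly less than 2^k (k+1)^k. -/
lemma psi_real_bound (k : ℕ) (hk : 2 ≤ k) :
    |psiFun k (2 - 2 / ((k : ℝ) + 1))| < 2 ^ k := by
  rcases eq_or_lt_of_le hk with h2 | h3
  · subst h2
    rw [show ((2:ℕ):ℝ) = 2 by norm_num]
    rw [abs_lt]
    constructor <;> norm_num [psiFun, Finset.sum_range_succ]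
  · set K : ℝ := (k : ℝ) with hKdef
    have h3' : 3 ≤ k := h3
    have hK3 : 3 ≤ K := by rw [hKdef]; exact_mod_cast h3'
    have hKp : (0:ℝ) < K + 1 := by linarith
    have hKm : (0:ℝ) < K - 1 := by linarith
    set y : ℝ := 2 - 2 / (K + 1) with hydef
    have hy : y = 2 * K / (K + 1) := by rw [hydef, eq_div_iff (ne_of_gt hKp), sub_mul, div_mul_cancel₀ _ (ne_of_gt hKp)]; ring
    have hy1 : 1 < y := by rw [hy, lt_div_iff₀ hKp]; linarith
    have hym1 : y - 1 = (K - 1) / (K + 1) := by rw [hy]; field_simp; ring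
    have hkne : k ≠ 0 := by omega
    have hpow : y ^ k ≤ 2 ^ k * K / (K + 1) := by
      have hy' : y = 2 * (K / (K + 1)) := by rw [hy]; ring
      have h1 : (K / (K + 1)) ^ k ≤ K / (K + 1) :=
        pow_le_of_le_one (by positivity) (by rw [div_le_one hKp]; linarith) hkne
      calc y ^ k = 2 ^ k * (K / (K + 1)) ^ k := by rw [hy', mul_pow]
        _ ≤ 2 ^ k * (K / (K + 1)) := by
            have : (0:ℝ) < 2 ^ k := by positivity
            nlinarith
        _ = 2 ^ k * K / (K + 1) := by ring
    have hpowgt : 1 < y ^ k := one_lt_pow₀ hy1 hkne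
    have hform : psiFun k y = (K + 1 - 2 * y ^ k) / (K - 1) := by
      simp only [psiFun]
      rw [geom_sum_eq (ne_of_gt hy1), hym1]
      field_simp
      ring
    rw [hform, abs_div, abs_of_pos hKm, div_lt_iff₀ hKm, abs_lt]
    have h2p : (0:ℝ) < 2 ^ k := by positivity
    constructor
    · have h : y ^ k * (K + 1) ≤ 2 ^ k * K := (le_div_iff₀ hKp).mp hpow
      have hq : 0 < (2:ℝ) ^ k * (K * K - 2 * K - 1) := mul_pos h2p (by nlinarith)
      nlinarith
    · have h1le : (1:ℝ) ≤ 2 ^ k := one_le_pow₀ (by norm_num)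
      nlinarith [mul_nonneg (sub_nonneg.mpr h1le) (le_of_lt hKm)]

/-- For `k ≥ 2`, if `α_1, …, α_k` are the complex roots of `Ψ_k`
(so that `Ψ_k(x) = ∏_{i=1}^k (x - α_i)` for all `x`), then
`∏_{i=1}^k |2 + (k+1)(α_i - 2)| = (k+1)^k |Ψ_k(2 - 2/(k+1))| < 2^k (k+1)^k`. -/
theorem prod_abs_denom_eq (k : ℕ) (hk : 2 ≤ k) (α : Fin k → ℂ)
    (hroots : ∀ x : ℂ, psiFun k x = ∏ i, (x - α i)) :
    (∏ i, ‖2 + (k + 1 : ℂ) * (α i - 2)‖) =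
      (k + 1 : ℝ) ^ k * ‖psiFun k (2 - 2 / (k + 1 : ℂ))‖ ∧
    (∏ i, ‖2 + (k + 1 : ℂ) * (α i - 2)‖) < 2 ^ k * (k + 1 : ℝ) ^ k := by
  have hkne : ((k : ℂ) + 1) ≠ 0 := by
    have := Nat.cast_add_one_ne_zero (R := ℂ) k
    push_cast at this ⊢
    exact this
  have key : (∏ i, ‖2 + (k + 1 : ℂ) * (α i - 2)‖) =
      (k + 1 : ℝ) ^ k * ‖psiFun k (2 - 2 / (k + 1 : ℂ))‖ := by
    rw [← norm_prod]
    have hprod : (∏ i, (2 + (k + 1 : ℂ) * (α i - 2)))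
        = (-((k : ℂ) + 1)) ^ k * psiFun k (2 - 2 / (k + 1 : ℂ)) := by
      calc (∏ i, (2 + (k + 1 : ℂ) * (α i - 2)))
          = ∏ i, (-((k : ℂ) + 1)) * ((2 - 2 / ((k : ℂ) + 1)) - α i) :=
            Finset.prod_congr rfl (fun i _ => by field_simp; ring)
        _ = (-((k : ℂ) + 1)) ^ k * ∏ i, ((2 - 2 / ((k : ℂ) + 1)) - α i) := by
            rw [Finset.prod_mul_distrib, Finset.prod_const, Finset.card_univ, Fintype.card_fin]
        _ = (-((k : ℂ) + 1)) ^ k * psiFun k (2 - 2 / (k + 1 : ℂ)) := by rw [← hroots]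
    rw [hprod, norm_mul, norm_pow, norm_neg]
    congr 2
    rw [show ((k : ℂ) + 1) = ((k + 1 : ℕ) : ℂ) by push_cast; ring, Complex.norm_natCast]
    push_cast; ring
  refine ⟨key, ?_⟩
  rw [key]
  have hcast : ‖psiFun k (2 - 2 / (k + 1 : ℂ))‖
      = |psiFun k (2 - 2 / ((k : ℝ) + 1))| := by
    have h1 : (2 - 2 / (k + 1 : ℂ)) = (((2 - 2 / ((k : ℝ) + 1)) : ℝ) : ℂ) := by
      push_cast; ring
    have h2 : psiFun k ((((2 - 2 / ((k : ℝ) + 1)) : ℝ)) : ℂ)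
        = ((psiFun k (2 - 2 / ((k : ℝ) + 1)) : ℝ) : ℂ) := by
      simp only [psiFun]
      push_cast
      ring
    rw [h1, h2, Complex.norm_real, Real.norm_eq_abs]
  rw [hcast]
  have hb := psi_real_bound k hk
  have hp : (0:ℝ) < ((k : ℝ) + 1) ^ k := by positivity
  calc ((k:ℝ) + 1) ^ k * |psiFun k (2 - 2 / ((k : ℝ) + 1))|
      < ((k:ℝ) + 1) ^ k * 2 ^ k := by
        exact mul_lt_mul_of_pos_left hb hp
    _ = 2 ^ k * ((k:ℝ) + 1) ^ k := by ring
end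

section
/- Let k ≥ 2 and n ≥ 2 be integers, and let α be a real number with Ψ_k(α) = 0 and 2(1 − 2^{−k}) < α < 2. Then there is no integer m ≥ 3 such that m = f_k(α) · α^{n−1}. -/
open Finset Polynomial


lemma three_point {f : ℝ → ℝ} (hf : StrictConvexOn ℝ (Set.Ioi 0) f) {x y z : ℝ}
    (hx : 0 < x) (hxy : x < y) (hyz : y < z) (hfx : f x = f y) (hfz : f z = f y) : False := by
  have hxz : x < z := hxy.trans hyz
  set a : ℝ := (z - y) / (z - x) with ha
  set b : ℝ := (y - x) / (z - x) with hb
  have hzx : (0:ℝ) < z - x := by linarith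
  have ha0 : 0 < a := div_pos (by linarith) hzx
  have hb0 : 0 < b := div_pos (by linarith) hzx
  have hab : a + b = 1 := by
    rw [ha, hb, ← add_div]
    field_simp
    ring
  have hy : a • x + b • z = y := by
    rw [smul_eq_mul, smul_eq_mul, ha, hb]
    field_simp
    ring
  have := hf.2 (Set.mem_Ioi.mpr hx) (Set.mem_Ioi.mpr (hx.trans hxz)) (ne_of_lt hxz) ha0 hb0 hab
  rw [hy, hfx, hfz] at this
  simp only [smul_eq_mul] at this
  have h2 : a * f y + b * f y = f y := by rw [← add_mul, hab, one_mul]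
  linarith

lemma hconvex (k : ℕ) (hk : 2 ≤ k) :
    StrictConvexOn ℝ (Set.Ioi 0) (fun x : ℝ => x + x ^ (-(k:ℤ))) := by
  have h1 : ConvexOn ℝ (Set.Ioi 0) (fun x : ℝ => x) := convexOn_id (convex_Ioi 0)
  have h2 : StrictConvexOn ℝ (Set.Ioi 0) (fun x : ℝ => x ^ (-(k:ℤ))) :=
    strictConvexOn_zpow (by omega) (by omega)
  exact h1.add_strictConvexOn h2

lemma rootSmall (k : ℕ) (hk : 2 ≤ k) (α : ℝ) (hα1 : 1 < α)
    (hαe : α ^ (k+1) - 2 * α ^ k + 1 = 0) (β : ℂ)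
    (hβ : β ^ k = ∑ i ∈ Finset.range k, β ^ i) (hβα : β ≠ (α : ℂ)) :
    ‖β‖ < 1 := by
  by_contra hc
  push_neg at hc
  set r : ℝ := ‖β‖ with hrdef
  have hr1 : 1 ≤ r := hc
  have hr0 : (0:ℝ) < r := lt_of_lt_of_le one_pos hr1
  have hrk0 : (0:ℝ) < r ^ k := pow_pos hr0 k
  -- key complex identity
  have h1 : β ^ k * (β - 1) = β ^ k - 1 := by
    have := geom_sum_mul β k
    rwa [← hβ] at this
  have hkey : β ^ (k+1) - 2 * β ^ k + 1 = 0 := by linear_combination h1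
  -- geometric bound
  have hgeo : r ^ k ≤ ∑ i ∈ Finset.range k, r ^ i := by
    calc r ^ k = ‖β ^ k‖ := by rw [norm_pow]
    _ = ‖∑ i ∈ Finset.range k, β ^ i‖ := by rw [hβ]
    _ ≤ ∑ i ∈ Finset.range k, ‖β ^ i‖ := norm_sum_le _ _
    _ = ∑ i ∈ Finset.range k, r ^ i := by simp [norm_pow, hrdef]
  have hA1 : r ^ (k+1) - 2 * r ^ k + 1 ≤ 0 := by
    have h2 := mul_le_mul_of_nonneg_right hgeo (sub_nonneg.mpr hr1)
    rw [geom_sum_mul] at h2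
    have hp : r ^ (k+1) = r ^ k * r := pow_succ r k
    nlinarith [h2]
  -- triangle bound
  have h3 : β ^ k * (2 - β) = 1 := by linear_combination -hkey
  have h2β : r ^ k * ‖2 - β‖ = 1 := by
    have := congrArg (‖·‖) h3
    rwa [norm_mul, norm_pow, norm_one] at this
  have htri : 2 ≤ r + ‖2 - β‖ := by
    have h4 : ‖β + (2 - β)‖ ≤ ‖β‖ + ‖2 - β‖ :=
      norm_add_le _ _
    simpa using h4
  have hA2 : 0 ≤ r ^ (k+1) - 2 * r ^ k + 1 := by
    have h5 := mul_le_mul_of_nonneg_right htri hrk0.le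
    have hp : r ^ (k+1) = r ^ k * r := pow_succ r k
    nlinarith [h5, h2β]
  have hA : r ^ (k+1) - 2 * r ^ k + 1 = 0 := le_antisymm hA1 hA2
  -- equality case: β is the nonnegative real r
  have h6 : (2 - r) * r ^ k = 1 := by
    have hp : r ^ (k+1) = r ^ k * r := pow_succ r k
    nlinarith [hA]
  have habs2 : ‖2 - β‖ = 2 - r := by
    have h7 : ‖2 - β‖ * r ^ k = (2 - r) * r ^ k := by
      rw [h6]; linarith [h2β, mul_comm (r ^ k) (‖2 - β‖)]
    exact mul_right_cancel₀ hrk0.ne' h7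
  have hsq1 : (2 - β.re) ^ 2 + β.im ^ 2 = (2 - r) ^ 2 := by
    have h8 : ‖2 - β‖ ^ 2 = (2 - r) ^ 2 := by rw [habs2]
    rw [Complex.sq_norm, Complex.normSq_apply] at h8
    simpa [Complex.sub_re, Complex.sub_im, sq] using h8
  have hsq2 : β.re ^ 2 + β.im ^ 2 = r ^ 2 := by
    have := Complex.sq_norm β
    rw [Complex.normSq_apply] at this
    simpa [sq] using this.symm
  have hre : β.re = r := by nlinarith [hsq1, hsq2]
  have him : β.im = 0 := by nlinarith [hsq1, hsq2]
  have hβr : β = (r : ℂ) := Complex.ext (by simp [hre]) (by simp [him])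
  have hrα : r ≠ α := fun h => hβα (by rw [hβr, h])
  -- real sum equation, so r ≠ 1
  have hsumr : r ^ k = ∑ i ∈ Finset.range k, r ^ i := by
    have := hβ
    rw [hβr] at this
    push_cast at this
    exact_mod_cast this
  have hrne1 : r ≠ 1 := by
    intro h
    rw [h] at hsumr
    simp at hsumr
    have : (k : ℝ) = 1 := by linarith [hsumr]
    have : k = 1 := by exact_mod_cast this
    omega
  have hr1' : 1 < r := lt_of_le_of_ne hr1 (Ne.symm hrne1)
  -- three points of the strictly convex map x ↦ x + x⁻ᵏ with equal value 2
  have hαk0 : (0:ℝ) < α ^ k := pow_pos (lt_trans one_pos hα1) k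
  set f : ℝ → ℝ := fun x => x + x ^ (-(k:ℤ)) with hfdef
  have hzpow : ∀ x : ℝ, 0 < x → f x = x + (x ^ k)⁻¹ := by
    intro x hx
    rw [hfdef]
    simp [zpow_neg, zpow_natCast]
  have hf1 : f 1 = 2 := by rw [hzpow 1 one_pos]; norm_num
  have hfr : f r = 2 := by
    rw [hzpow r hr0]
    have h9 : (r ^ k)⁻¹ = 2 - r := inv_eq_of_mul_eq_one_right (by linear_combination h6)
    rw [h9]; ring
  have hfα : f α = 2 := by
    rw [hzpow α (lt_trans one_pos hα1)]
    have hp : α ^ (k+1) = α ^ k * α := pow_succ α k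
    have h9 : (α ^ k)⁻¹ = 2 - α := inv_eq_of_mul_eq_one_right (by linear_combination -hαe)
    rw [h9]; ring
  have hcon := hconvex k hk
  rcases lt_or_gt_of_ne hrα with h | h
  · exact three_point hcon one_pos hr1' h (show f 1 = f r by rw [hf1, hfr])
      (show f α = f r by rw [hfα, hfr])
  · exact three_point hcon one_pos hα1 h (show f 1 = f α by rw [hf1, hfα])
      (show f r = f α by rw [hfr, hfα])

lemma psi_monic {R : Type*} [CommRing R] [Nontrivial R] (k : ℕ) (hk : 1 ≤ k) :
    (Polynomial.X ^ k - ∑ i ∈ Finset.range k, Polynomial.X ^ i : Polynomial R).Monic := by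
  apply Polynomial.monic_X_pow_sub
  apply lt_of_le_of_lt (Polynomial.degree_sum_le _ _)
  rw [Finset.sup_lt_iff (by exact_mod_cast WithBot.bot_lt_coe k)]
  intro i hi
  rw [Polynomial.degree_X_pow]
  exact_mod_cast Finset.mem_range.mp hi


/-- For `k ≥ 2`, `n ≥ 2` and the real root `α` of `Ψ_k` with `2(1 - 2^{-k}) < α < 2`,
no integer `m ≥ 3` satisfies `m = f_k(α) α^{n-1}`. -/
theorem no_integer_eq_fk_mul_pow (k n : ℕ) (hk : 2 ≤ k) (hn : 2 ≤ n) (α : ℝ)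
    (hroot : psiFun k α = 0) (hα₁ : 2 * (1 - 2 ^ (-(k : ℝ))) < α) (hα₂ : α < 2) :
    ¬∃ m : ℤ, 3 ≤ m ∧ (m : ℝ) = fk k α * α ^ (n - 1) := by
  rintro ⟨m, hm3, hm⟩
  have hm3R : (3:ℝ) ≤ (m:ℝ) := by exact_mod_cast hm3
  -- α > 3/2
  have hpow : (2:ℝ) ^ (-(k:ℝ)) ≤ 1/4 := by
    rw [Real.rpow_neg (by norm_num), Real.rpow_natCast]
    have h4 : (4:ℝ) ≤ 2 ^ k := by
      have : (2:ℝ) ^ 2 ≤ 2 ^ k := pow_le_pow_right₀ (by norm_num) hk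
      nlinarith [this]
    rw [show (1:ℝ)/4 = ((4:ℝ))⁻¹ by norm_num]
    exact inv_anti₀ (by norm_num) h4
  have hα1 : (3:ℝ)/2 < α := by nlinarith [hpow, hα₁]
  have hα1' : 1 < α := by linarith
  have hα0 : (0:ℝ) < α := by linarith
  -- key identity
  have hsum : α ^ k = ∑ i ∈ Finset.range k, α ^ i := by
    have := hroot
    rw [psiFun, sub_eq_zero] at this
    exact this
  have h1 : α ^ k * (α - 1) = α ^ k - 1 := by
    have := geom_sum_mul α k
    rwa [← hsum] at this
  have hαe : α ^ (k+1) - 2 * α ^ k + 1 = 0 := by linear_combination h1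
  -- relation for m over ℝ
  have hD : (2 + ((k:ℝ) + 1) * (α - 2)) ≠ 0 := by
    intro h
    rw [fk, h, div_zero, zero_mul] at hm
    linarith
  have hmrel : (m:ℝ) * (2 * α ^ k - ((k:ℝ)+1)) = α ^ (n-1) * (α ^ k - 1) := by
    have hfk : fk k α * (2 + ((k:ℝ)+1) * (α - 2)) = α - 1 := by
      rw [fk]; field_simp
    have hDα : (2 + ((k:ℝ)+1) * (α - 2)) * α ^ k = 2 * α ^ k - ((k:ℝ)+1) := by
      linear_combination ((k:ℝ)+1) * hαe
    calc (m:ℝ) * (2 * α ^ k - ((k:ℝ)+1))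
        = (fk k α * α ^ (n-1)) * ((2 + ((k:ℝ)+1) * (α - 2)) * α ^ k) := by rw [← hm, hDα]
      _ = (fk k α * (2 + ((k:ℝ)+1) * (α - 2))) * (α ^ (n-1) * α ^ k) := by ring
      _ = (α - 1) * (α ^ (n-1) * α ^ k) := by rw [hfk]
      _ = α ^ (n-1) * (α ^ k * (α - 1)) := by ring
      _ = α ^ (n-1) * (α ^ k - 1) := by rw [h1]
  -- the characteristic polynomial over ℚ
  set Ψq : Polynomial ℚ := Polynomial.X ^ k - ∑ i ∈ Finset.range k, Polynomial.X ^ i with hΨdef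
  have hΨmonic : Ψq.Monic := psi_monic k (by omega)
  have hΨα : Polynomial.aeval α Ψq = 0 := by
    rw [hΨdef]
    simp only [map_sub, map_sum, Polynomial.aeval_X_pow]
    rw [← hsum]; ring
  have halg : IsAlgebraic ℚ α := ⟨Ψq, hΨmonic.ne_zero, hΨα⟩
  have hint : IsIntegral ℚ α := halg.isIntegral
  -- α is irrational
  have hirr : α ∉ (algebraMap ℚ ℝ).range := by
    rintro ⟨q, hq⟩
    set Ψz : Polynomial ℤ := Polynomial.X ^ k - ∑ i ∈ Finset.range k, Polynomial.X ^ i with hΨzdef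
    have hΨzmonic : Ψz.Monic := psi_monic k (by omega)
    have hΨzq : Polynomial.aeval q Ψz = 0 := by
      have hinj : Function.Injective (algebraMap ℚ ℝ) := (algebraMap ℚ ℝ).injective
      apply hinj
      rw [← Polynomial.aeval_algebraMap_apply, hq, map_zero]
      rw [hΨzdef]
      simp only [map_sub, map_sum, Polynomial.aeval_X_pow]
      rw [← hsum]; ring
    have hqint : IsIntegral ℤ q := ⟨Ψz, hΨzmonic, by rwa [← Polynomial.aeval_def]⟩
    obtain ⟨z, hz⟩ := IsIntegrallyClosed.isIntegral_iff.mp hqint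
    have hzα : (z:ℝ) = α := by
      rw [← hq, ← hz]
      norm_num
    have hz2 : (z:ℝ) < 2 := by rw [hzα]; exact hα₂
    have hz1 : (3:ℝ)/2 < (z:ℝ) := by rw [hzα]; exact hα1
    have : (2:ℤ) ≤ z ∨ z ≤ 1 := by omega
    rcases this with h | h
    · have : (2:ℝ) ≤ (z:ℝ) := by exact_mod_cast h
      linarith
    · have : (z:ℝ) ≤ 1 := by exact_mod_cast h
      linarith
  have hd2 : 2 ≤ (minpoly ℚ α).natDegree := (minpoly.two_le_natDegree_iff hint).mpr hirr
  -- the polynomial expressing the integrality relation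
  set Q : Polynomial ℚ := Polynomial.C ((m:ℚ)) * (Polynomial.C 2 * Polynomial.X ^ k -
      Polynomial.C ((k:ℚ)+1)) - Polynomial.X ^ (n-1) * (Polynomial.X ^ k - 1) with hQdef
  have hQα : Polynomial.aeval α Q = 0 := by
    rw [hQdef]
    simp only [map_sub, map_mul, map_add, map_one, Polynomial.aeval_C, Polynomial.aeval_X_pow,
      map_ofNat, map_intCast, map_natCast]
    push_cast
    linear_combination hmrel
  -- a second complex root of the minimal polynomial
  set μ : Polynomial ℚ := minpoly ℚ α with hμdef
  have hμΨ : μ ∣ Ψq := minpoly.dvd ℚ α hΨα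
  have hμQ : μ ∣ Q := minpoly.dvd ℚ α hQα
  set μc : Polynomial ℂ := μ.map (algebraMap ℚ ℂ) with hμcdef
  have hμmonic : μ.Monic := minpoly.monic hint
  have hμc0 : μc ≠ 0 := (hμmonic.map _).ne_zero
  have hcard : Multiset.card μc.roots = μ.natDegree := by
    rw [Polynomial.splits_iff_card_roots.mp (IsAlgClosed.splits μc)]
    exact Polynomial.natDegree_map (algebraMap ℚ ℂ)
  have hnodup : μc.roots.Nodup :=
    Polynomial.nodup_roots ((minpoly.irreducible hint).separable.map)
  have haeval : ∀ y : ℂ, Polynomial.aeval y μ = Polynomial.eval y μc := by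
    intro y
    rw [Polynomial.aeval_def, Polynomial.eval₂_eq_eval_map]
  have hαc : Polynomial.eval ((α:ℂ)) μc = 0 := by
    rw [← haeval]
    have : ((α:ℂ)) = algebraMap ℝ ℂ α := rfl
    rw [this, Polynomial.aeval_algebraMap_apply, minpoly.aeval, map_zero]
  have hex : ∃ β ∈ μc.roots, β ≠ (α:ℂ) := by
    by_contra hcon
    push_neg at hcon
    have hcnt := Multiset.count_eq_card.mpr (fun x hx => (hcon x hx).symm)
    have hle := Multiset.nodup_iff_count_le_one.mp hnodup (α:ℂ)
    rw [hcnt] at hle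
    omega
  obtain ⟨β, hβmem, hβne⟩ := hex
  have hβμ : Polynomial.aeval β μ = 0 := by
    rw [haeval]
    exact Polynomial.isRoot_of_mem_roots hβmem
  have hβΨ : Polynomial.aeval β Ψq = 0 := by
    obtain ⟨c, hc⟩ := hμΨ
    rw [hc, map_mul, hβμ, zero_mul]
  have hβQ : Polynomial.aeval β Q = 0 := by
    obtain ⟨c, hc⟩ := hμQ
    rw [hc, map_mul, hβμ, zero_mul]
  have hβsum : β ^ k = ∑ i ∈ Finset.range k, β ^ i := by
    rw [hΨdef] at hβΨ
    simp only [map_sub, map_sum, Polynomial.aeval_X_pow] at hβΨ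
    rw [sub_eq_zero] at hβΨ
    exact hβΨ
  have hβrel : (m:ℂ) * (2 * β ^ k - ((k:ℂ)+1)) = β ^ (n-1) * (β ^ k - 1) := by
    rw [hQdef] at hβQ
    simp only [map_sub, map_mul, map_add, map_one, Polynomial.aeval_C, Polynomial.aeval_X_pow,
      map_ofNat, map_intCast, map_natCast] at hβQ
    rw [sub_eq_zero] at hβQ
    push_cast at hβQ
    exact hβQ
  -- the second root is small, contradiction with m ≥ 3
  have hsmall : ‖β‖ < 1 := rootSmall k hk α hα1' hαe β hβsum hβne
  set s : ℝ := ‖β‖ with hsdef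
  have hs0 : 0 ≤ s := norm_nonneg β
  have hsk : s ^ k < 1 := pow_lt_one₀ hs0 hsmall (by omega)
  have hsn : s ^ (n-1) ≤ 1 := pow_le_one₀ hs0 hsmall.le
  have habs := congrArg (‖·‖) hβrel
  rw [norm_mul, norm_mul] at habs
  have hmabs : ‖(m:ℂ)‖ = (m:ℝ) := by
    rw [Complex.norm_intCast]
    rw [abs_of_nonneg (by linarith : (0:ℝ) ≤ (m:ℝ))]
  have hlhs : (3:ℝ) * (((k:ℝ)+1) - 2 * s ^ k) ≤
      ‖(m:ℂ)‖ * ‖2 * β ^ k - ((k:ℂ)+1)‖ := by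
    have h1' : ((k:ℝ)+1) - 2 * s ^ k ≤ ‖2 * β ^ k - ((k:ℂ)+1)‖ := by
      have := norm_sub_norm_le ((k:ℂ)+1) (2 * β ^ k)
      have he1 : ‖(k:ℂ)+1‖ = (k:ℝ)+1 := by
        rw [show ((k:ℂ)+1) = (((k:ℝ)+1 : ℝ) : ℂ) by push_cast; ring, Complex.norm_real, Real.norm_eq_abs]
        rw [abs_of_nonneg (by positivity)]
      have he2 : ‖2 * β ^ k‖ = 2 * s ^ k := by
        rw [norm_mul, norm_pow]
        simp [hsdef]
      have he3 : ‖((k:ℂ)+1) - 2 * β ^ k‖ = ‖2 * β ^ k - ((k:ℂ)+1)‖ := by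
        rw [← norm_neg]; ring_nf
      rw [he1, he2, he3] at this
      linarith
    have hpos : (0:ℝ) ≤ ((k:ℝ)+1) - 2 * s ^ k := by
      have : (2:ℝ) ≤ (k:ℝ) := by exact_mod_cast hk
      nlinarith
    calc (3:ℝ) * (((k:ℝ)+1) - 2 * s ^ k) ≤ (m:ℝ) * (((k:ℝ)+1) - 2 * s ^ k) :=
        mul_le_mul_of_nonneg_right hm3R hpos
      _ ≤ (m:ℝ) * ‖2 * β ^ k - ((k:ℂ)+1)‖ :=
        mul_le_mul_of_nonneg_left h1' (by linarith)
      _ = ‖(m:ℂ)‖ * ‖2 * β ^ k - ((k:ℂ)+1)‖ := by rw [hmabs]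
  have hrhs : ‖β ^ (n-1)‖ * ‖β ^ k - 1‖ ≤ s ^ (n-1) * (s ^ k + 1) := by
    have he4 : ‖β ^ (n-1)‖ = s ^ (n-1) := by rw [norm_pow, hsdef]
    have he5 : ‖β ^ k - 1‖ ≤ s ^ k + 1 := by
      calc ‖β ^ k - 1‖ ≤ ‖β ^ k‖ + ‖1‖ := norm_sub_le _ _
        _ = s ^ k + 1 := by rw [norm_pow, norm_one]
    rw [he4]
    exact mul_le_mul (le_refl _) he5 (norm_nonneg _) (pow_nonneg hs0 (n-1))
  have hk2 : (2:ℝ) ≤ (k:ℝ) := by exact_mod_cast hk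
  have e1 : (3:ℝ) ≤ 3 * (((k:ℝ)+1) - 2 * s ^ k) := by linarith
  have e2 : s ^ (n-1) * (s ^ k + 1) ≤ s ^ k + 1 :=
    mul_le_of_le_one_left (by positivity) hsn
  linarith [habs, hlhs, hrhs, e1, e2, hsk]
end

section
/- Let k ≥ 2 be an integer, let α be a real number with Ψ_k(α) = 0 and 2(1 − 2^{−k}) < α < 2, and let n be an integer with 2 ≤ n < 2^{k/2}. Then |α^{n−1} − 2^{n−1}| < 2^n / 2^{k/2}. -/
/-- For `k ≥ 2`, the real root `α` of `Ψ_k` with `2(1 - 2^{-k}) < α < 2`, and an integer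
`n` with `2 ≤ n < 2^{k/2}`, one has `|α^{n-1} - 2^{n-1}| < 2^n / 2^{k/2}`. -/
theorem abs_pow_sub_pow_lt (k n : ℕ) (hk : 2 ≤ k) (α : ℝ) (hroot : psiFun k α = 0)
    (hα₁ : 2 * (1 - 2 ^ (-(k : ℝ))) < α) (hα₂ : α < 2)
    (hn₁ : 2 ≤ n) (hn₂ : (n : ℝ) < 2 ^ ((k : ℝ) / 2)) :
    |α ^ (n - 1) - 2 ^ (n - 1)| < 2 ^ n / 2 ^ ((k : ℝ) / 2) := by
  have hα0 : 0 < α := by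
    have h1 : (2:ℝ) ^ (-(k:ℝ)) < 1 := by
      apply Real.rpow_lt_one_of_one_lt_of_neg (by norm_num)
      have : (0:ℝ) < k := by positivity
      linarith
    nlinarith
  set m := n - 1 with hm
  have hm1 : 1 ≤ m := by omega
  have hmn : m < n := by omega
  have hsub : (2:ℝ) - α < 2 * 2 ^ (-(k:ℝ)) := by nlinarith
  have hpos1 : (0:ℝ) < 2 - α := by linarith
  have habs : |α ^ m - 2 ^ m| = 2 ^ m - α ^ m := by
    rw [abs_sub_comm, abs_of_nonneg]
    have := pow_le_pow_left₀ hα0.le hα₂.le m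
    linarith
  rw [habs]
  have hS : ∑ i ∈ Finset.range m, (2:ℝ) ^ i * α ^ (m - 1 - i) ≤ m * 2 ^ (m - 1) := by
    calc ∑ i ∈ Finset.range m, (2:ℝ) ^ i * α ^ (m - 1 - i)
        ≤ ∑ i ∈ Finset.range m, (2:ℝ) ^ (m - 1) := by
          apply Finset.sum_le_sum
          intro i hi
          have hi' : i < m := Finset.mem_range.mp hi
          have he : i + (m - 1 - i) = m - 1 := by omega
          calc (2:ℝ) ^ i * α ^ (m - 1 - i)
              ≤ (2:ℝ) ^ i * (2:ℝ) ^ (m - 1 - i) := by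
                exact mul_le_mul_of_nonneg_left
                  (pow_le_pow_left₀ hα0.le hα₂.le _) (by positivity)
            _ = (2:ℝ) ^ (m - 1) := by rw [← pow_add, he]
      _ = m * 2 ^ (m - 1) := by simp [mul_comm]
  have h1 : (2:ℝ) ^ m - α ^ m ≤ (m:ℝ) * 2 ^ (m - 1) * (2 - α) := by
    rw [← geom_sum₂_mul]
    exact mul_le_mul_of_nonneg_right hS hpos1.le
  have hmpos : (0:ℝ) < (m:ℝ) * 2 ^ (m - 1) := by
    have : (0:ℝ) < (m:ℝ) := by exact_mod_cast hm1
    positivity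
  have h2 : (m:ℝ) * 2 ^ (m - 1) * (2 - α) < (m:ℝ) * 2 ^ (m - 1) * (2 * 2 ^ (-(k:ℝ))) :=
    mul_lt_mul_of_pos_left hsub hmpos
  have hmlt : (m:ℝ) < 2 ^ ((k:ℝ)/2) := by
    have : (m:ℝ) < (n:ℝ) := by exact_mod_cast hmn
    linarith
  have h3 : (m:ℝ) * 2 ^ (m - 1) * (2 * 2 ^ (-(k:ℝ)))
      < (2:ℝ) ^ ((k:ℝ)/2) * 2 ^ (m - 1) * (2 * 2 ^ (-(k:ℝ))) := by
    have hp : (0:ℝ) < 2 ^ (m - 1) * (2 * 2 ^ (-(k:ℝ))) := by positivity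
    calc (m:ℝ) * 2 ^ (m - 1) * (2 * 2 ^ (-(k:ℝ)))
        = (m:ℝ) * (2 ^ (m - 1) * (2 * 2 ^ (-(k:ℝ)))) := by ring
      _ < (2:ℝ) ^ ((k:ℝ)/2) * (2 ^ (m - 1) * (2 * 2 ^ (-(k:ℝ)))) :=
          mul_lt_mul_of_pos_right hmlt hp
      _ = (2:ℝ) ^ ((k:ℝ)/2) * 2 ^ (m - 1) * (2 * 2 ^ (-(k:ℝ))) := by ring
  have hkpos : (0:ℝ) < (2:ℝ) ^ ((k:ℝ)/2) := Real.rpow_pos_of_pos two_pos _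
  have key : (2:ℝ) ^ ((k:ℝ)/2) * 2 ^ (m - 1) * (2 * 2 ^ (-(k:ℝ)))
      = 2 ^ m / 2 ^ ((k:ℝ)/2) := by
    rw [eq_div_iff (ne_of_gt hkpos)]
    have e : (2:ℝ) ^ ((k:ℝ)/2) * 2 ^ (-(k:ℝ)) * 2 ^ ((k:ℝ)/2) = 1 := by
      rw [← Real.rpow_add two_pos, ← Real.rpow_add two_pos]
      have : (k:ℝ)/2 + -(k:ℝ) + (k:ℝ)/2 = 0 := by ring
      rw [this, Real.rpow_zero]
    have e2 : (2:ℝ) ^ (m - 1) * 2 = (2:ℝ) ^ m := by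
      rw [← pow_succ]
      congr 1
      omega
    calc (2:ℝ) ^ ((k:ℝ)/2) * 2 ^ (m - 1) * (2 * 2 ^ (-(k:ℝ))) * 2 ^ ((k:ℝ)/2)
        = ((2:ℝ) ^ (m - 1) * 2) * ((2:ℝ) ^ ((k:ℝ)/2) * 2 ^ (-(k:ℝ)) * 2 ^ ((k:ℝ)/2)) := by
          ring
      _ = (2:ℝ) ^ m := by rw [e, e2, mul_one]
  have hfin : (2:ℝ) ^ m / 2 ^ ((k:ℝ)/2) < 2 ^ n / 2 ^ ((k:ℝ)/2) := by
    gcongr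
    norm_num
  linarith
end

section
/- Let k ≥ 2 be an integer and let α be a real number with Ψ_k(α) = 0 and 2(1 − 2^{−k}) < α < 2. Then |f_k(α) − 1/2| < 2k/2^k. -/
lemma four_mul_le : ∀ k, 2 ≤ k → 4 * (k + 1) ≤ 3 * 2 ^ k := by
  intro k hk
  induction k with
  | zero => omega
  | succ n ih =>
    rcases Nat.lt_or_ge n 2 with h | h
    · interval_cases n <;> simp_all <;> omega
    · have := ih h
      have h2 : 4 ≤ 3 * 2 ^ n := by nlinarith [Nat.one_le_two_pow (n := n)]
      calc 4 * (n + 1 + 1) = 4 * (n + 1) + 4 := by ring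
        _ ≤ 3 * 2 ^ n + 3 * 2 ^ n := by omega
        _ = 3 * 2 ^ (n + 1) := by ring

/-- For `k ≥ 2` and the real root `α` of `Ψ_k` with `2(1 - 2^{-k}) < α < 2`, one has
`|f_k(α) - 1/2| < 2k / 2^k`. -/
theorem abs_fk_sub_half_lt (k : ℕ) (hk : 2 ≤ k) (α : ℝ) (hroot : psiFun k α = 0)
    (hα₁ : 2 * (1 - 2 ^ (-(k : ℝ))) < α) (hα₂ : α < 2) :
    |fk k α - 1 / 2| < 2 * (k : ℝ) / 2 ^ k := by
  have h2k : (0:ℝ) < 2 ^ k := by positivity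
  have hpow : (2:ℝ) ^ (-(k : ℝ)) = 1 / 2 ^ k := by
    rw [Real.rpow_neg (by norm_num), Real.rpow_natCast]
    ring
  rw [hpow] at hα₁
  set ε : ℝ := 2 - α with hεdef
  have hε0 : 0 < ε := by simp only [hεdef]; linarith
  have hεlt : ε < 2 / 2 ^ k := by
    have : 2 / (2:ℝ) ^ k = 2 * (1 / 2 ^ k) := by ring
    rw [this]; simp only [hεdef]; linarith
  have hk1 : (1:ℝ) ≤ (k:ℝ) - 1 := by
    have : (2:ℝ) ≤ (k:ℝ) := by exact_mod_cast hk
    linarith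
  have hkey : ((k:ℝ) + 1) * (2 / 2 ^ k) ≤ 3 / 2 := by
    have hc : ((k:ℝ) + 1) * (2 / 2 ^ k) = (2 * ((k:ℝ) + 1)) / 2 ^ k := by ring
    rw [hc, div_le_div_iff₀ h2k (by norm_num)]
    have := four_mul_le k hk
    have : (4:ℝ) * (k + 1) ≤ 3 * 2 ^ k := by exact_mod_cast this
    nlinarith
  have hεmul : ((k:ℝ) + 1) * ε < 3 / 2 := by
    have hkpos : (0:ℝ) < (k:ℝ) + 1 := by positivity
    calc ((k:ℝ) + 1) * ε < ((k:ℝ) + 1) * (2 / 2 ^ k) :=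
          mul_lt_mul_of_pos_left hεlt hkpos
      _ ≤ 3 / 2 := hkey
  set D : ℝ := 2 + ((k:ℝ) + 1) * (α - 2) with hDdef
  have hD : 1 / 2 < D := by
    have : D = 2 - ((k:ℝ) + 1) * ε := by rw [hDdef, hεdef]; ring
    rw [this]; linarith
  have hDpos : 0 < D := by linarith
  have heq : fk k α - 1 / 2 = ((k:ℝ) - 1) * ε / (2 * D) := by
    rw [fk, hεdef, hDdef]
    field_simp [show (2:ℝ) + ((k:ℝ) + 1) * (α - 2) ≠ 0 from hDpos.ne']
    ring
  rw [heq]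
  have hNpos : 0 < ((k:ℝ) - 1) * ε := by positivity
  have h1 : ((k:ℝ) - 1) * ε / (2 * D) < ((k:ℝ) - 1) * ε :=
    div_lt_self hNpos (by linarith)
  have h2 : ((k:ℝ) - 1) * ε < ((k:ℝ) - 1) * (2 / 2 ^ k) :=
    mul_lt_mul_of_pos_left hεlt (by linarith)
  have h3 : ((k:ℝ) - 1) * (2 / 2 ^ k) < 2 * (k:ℝ) / 2 ^ k := by
    have hc : ((k:ℝ) - 1) * (2 / 2 ^ k) = (2 * ((k:ℝ) - 1)) / 2 ^ k := by ring
    rw [hc]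
    gcongr
    linarith
  rw [abs_of_pos (by positivity)]
  linarith
end
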